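/- Suppose additionally that y >= sqrt(1 - (x - 1/2)^2) + sqrt(3)/2 (region R2_2). Then the optimal radius for packings of 2 equal circles satisfies r_2(x,y) = 1/2. -/

import Mathlib

noncomputable section

/-- The point `(a, b)` in the Euclidean plane. -/
def pt (a b : ℝ) : EuclideanSpace ℝ (Fin 2) :=
  (WithLp.equiv 2 (Fin 2 → ℝ)).symm ![a, b]

/-- The lattice generated by `v1 = (1,0)` and `v2 = (x,y)`. -/
def TLat (x y : ℝ) : Set (EuclideanSpace ℝ (Fin 2)) :=
  {v | ∃ m n : ℤ, v = (m : ℝ) • pt 1 0 + (n : ℝ) • pt x y}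

/-- `p` is a packing of `k` equal circles of radius `r` on the flat torus `ℝ²/Λ(x,y)`. -/
def IsPacking (x y : ℝ) {k : ℕ} (r : ℝ) (p : Fin k → EuclideanSpace ℝ (Fin 2)) : Prop :=
  ∀ i j : Fin k, ∀ l ∈ TLat x y, (i ≠ j ∨ l ≠ 0) → 2 * r ≤ ‖p i - p j + l‖

/-- The optimal (supremal) radius for packings of `k` equal circles on the torus `ℝ²/Λ(x,y)`. -/
def optRadius (x y : ℝ) (k : ℕ) : ℝ :=
  sSup {r : ℝ | 0 ≤ r ∧ ∃ p : Fin k → EuclideanSpace ℝ (Fin 2), IsPacking x y r p}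

lemma pt_add (a b c d : ℝ) : pt a b + pt c d = pt (a+c) (b+d) := by
  ext i; fin_cases i <;> simp [pt]

lemma pt_smul (r a b : ℝ) : r • pt a b = pt (r*a) (r*b) := by
  ext i; fin_cases i <;> simp [pt]

lemma pt_neg (a b : ℝ) : -pt a b = pt (-a) (-b) := by
  ext i; fin_cases i <;> simp [pt]

lemma pt_zero : pt 0 0 = 0 := by
  ext i; fin_cases i <;> simp [pt]

lemma norm_pt (a b : ℝ) : ‖pt a b‖ = Real.sqrt (a^2 + b^2) := by
  rw [EuclideanSpace.norm_eq]
  simp [pt, Fin.sum_univ_two, Real.norm_eq_abs, sq_abs]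

lemma one_le_norm_pt (a b : ℝ) (h : 1 ≤ a^2 + b^2) : 1 ≤ ‖pt a b‖ := by
  rw [norm_pt]
  have := Real.sqrt_le_sqrt h
  rwa [Real.sqrt_one] at this

lemma lat_pt (x y : ℝ) (m n : ℤ) :
    (m : ℝ) • pt 1 0 + (n : ℝ) • pt x y = pt (m + n*x) (n*y) := by
  rw [pt_smul, pt_smul, pt_add]; ring_nf

lemma int_half (m : ℤ) : (1:ℝ)/4 ≤ ((m:ℝ) + 1/2)^2 := by
  rcases le_or_gt 0 m with h | h
  · have : (0:ℝ) ≤ m := by exact_mod_cast h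
    nlinarith
  · have : (m:ℝ) ≤ -1 := by have h' : m ≤ -1 := by omega
                            exact_mod_cast h'
    nlinarith

lemma int_shift (m : ℤ) (t : ℝ) (h0 : 0 ≤ t) (h1 : t ≤ 1/2) :
    t^2 ≤ ((m:ℝ) + t)^2 := by
  rcases le_or_gt 0 m with h | h
  · have : (0:ℝ) ≤ m := by exact_mod_cast h
    nlinarith
  · have : (m:ℝ) ≤ -1 := by have h' : m ≤ -1 := by omega
                            exact_mod_cast h'
    nlinarith

lemma int_sq (n : ℤ) (h : n ≠ 0) : (1:ℝ) ≤ (n:ℝ)^2 := by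
  have : 1 ≤ |(n:ℝ)| := by
    have := Int.one_le_abs h
    calc (1:ℝ) ≤ ((|n| : ℤ) : ℝ) := by exact_mod_cast this
    _ = |(n:ℝ)| := by push_cast; ring
  nlinarith [abs_nonneg (n:ℝ), sq_abs (n:ℝ)]

/-- Core inequality for the difference vector between the two circle centers. -/
lemma coreA (x y : ℝ) (hx0 : 0 ≤ x) (hx1 : x ≤ 1/2)
    (hy3 : Real.sqrt 3 ≤ y)
    (hsq : 1 - (x - 1/2)^2 ≤ (y - Real.sqrt 3 / 2)^2) (m n : ℤ) :
    1 ≤ (1/2 + m + n*x)^2 + (Real.sqrt 3/2 + n*y)^2 := by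
  have hs : Real.sqrt 3 ^ 2 = 3 := Real.sq_sqrt (by norm_num)
  have hs0 : (0:ℝ) ≤ Real.sqrt 3 := Real.sqrt_nonneg 3
  have hs1 : (1:ℝ) ≤ Real.sqrt 3 := by nlinarith
  have hy0 : (0:ℝ) ≤ y := le_trans hs0 hy3
  rcases eq_or_ne n 0 with rfl | hn
  · have := int_half m
    push_cast
    nlinarith
  rcases eq_or_ne n (-1) with rfl | hn1
  · have h2 := int_shift m (1/2 - x) (by linarith) (by linarith)
    push_cast
    nlinarith
  rcases le_or_gt 1 n with h | h
  · have hn' : (1:ℝ) ≤ (n:ℝ) := by exact_mod_cast h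
    have : y ≤ (n:ℝ) * y := by nlinarith
    nlinarith [sq_nonneg ((1:ℝ)/2 + m + n*x)]
  · have h2 : n ≤ -2 := by omega
    have hn' : (n:ℝ) ≤ -2 := by exact_mod_cast h2
    have : (n:ℝ) * y ≤ -2 * y := by nlinarith
    nlinarith [sq_nonneg ((1:ℝ)/2 + m + n*x)]

/-- Core inequality for nonzero lattice vectors. -/
lemma coreB (x y : ℝ) (hy3 : Real.sqrt 3 ≤ y) (m n : ℤ) (h : ¬(m = 0 ∧ n = 0)) :
    1 ≤ ((m:ℝ) + n*x)^2 + ((n:ℝ)*y)^2 := by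
  have hs : Real.sqrt 3 ^ 2 = 3 := Real.sq_sqrt (by norm_num)
  have hs0 : (0:ℝ) ≤ Real.sqrt 3 := Real.sqrt_nonneg 3
  rcases eq_or_ne n 0 with rfl | hn
  · have hm : m ≠ 0 := by tauto
    have := int_sq m hm
    push_cast
    nlinarith
  · have h1 := int_sq n hn
    nlinarith [sq_nonneg ((m:ℝ) + n*x), sq_nonneg ((n:ℝ)*y - y), sq_nonneg y]

theorem two_circles_region_R2 (x y : ℝ) (hxy : 1 ≤ x ^ 2 + y ^ 2) (hy : 0 < y) (hx0 : 0 ≤ x) (hx1 : x ≤ 1 / 2)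
    (hreg : Real.sqrt (1 - (x - 1 / 2) ^ 2) + Real.sqrt 3 / 2 ≤ y)
    : optRadius x y 2 = 1 / 2 := by
  have hs : Real.sqrt 3 ^ 2 = 3 := Real.sq_sqrt (by norm_num)
  have hs0 : (0:ℝ) ≤ Real.sqrt 3 := Real.sqrt_nonneg 3
  -- y ≥ √3
  have harg0 : (0:ℝ) ≤ 1 - (x - 1/2)^2 := by nlinarith
  have hq : Real.sqrt 3 / 2 ≤ Real.sqrt (1 - (x - 1/2)^2) := by
    have h34 : (Real.sqrt 3 / 2)^2 ≤ 1 - (x - 1/2)^2 := by nlinarith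
    calc Real.sqrt 3 / 2 = Real.sqrt ((Real.sqrt 3 / 2)^2) :=
          (Real.sqrt_sq (by positivity)).symm
      _ ≤ _ := Real.sqrt_le_sqrt h34
  have hy3 : Real.sqrt 3 ≤ y := by linarith
  -- (y - √3/2)² ≥ 1 - (x-1/2)²
  have hsq : 1 - (x - 1/2)^2 ≤ (y - Real.sqrt 3 / 2)^2 := by
    have h1 : Real.sqrt (1 - (x - 1/2)^2) ≤ y - Real.sqrt 3 / 2 := by linarith
    have h2 := Real.sq_sqrt harg0
    have h3 := Real.sqrt_nonneg (1 - (x - 1/2)^2)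
    nlinarith
  set S := {r : ℝ | 0 ≤ r ∧ ∃ p : Fin 2 → EuclideanSpace ℝ (Fin 2), IsPacking x y r p}
  -- the explicit packing
  have hmem : (1/2 : ℝ) ∈ S := by
    refine ⟨by norm_num, ![0, pt (1/2) (Real.sqrt 3 / 2)], ?_⟩
    rintro i j l ⟨m, n, rfl⟩ hne
    rw [lat_pt]
    rw [show (2:ℝ) * (1/2) = 1 by norm_num]
    rcases eq_or_ne i j with rfl | hij
    · -- diagonal case
      have hl : pt ((m:ℝ) + n*x) ((n:ℝ)*y) ≠ 0 := by
        rcases hne with h | h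
        · exact absurd rfl h
        · rwa [lat_pt] at h
      have hmn : ¬(m = 0 ∧ n = 0) := by
        rintro ⟨rfl, rfl⟩
        apply hl
        simpa using pt_zero
      rw [sub_self, zero_add]
      exact one_le_norm_pt _ _ (coreB x y hy3 m n hmn)
    · -- off-diagonal case
      have hA := coreA x y hx0 (by linarith) hy3 hsq
      fin_cases i <;> fin_cases j
      · exact absurd rfl hij
      · -- i = 0, j = 1 : p0 - p1 + l = -d + l
        have : (0 : EuclideanSpace ℝ (Fin 2)) - pt (1/2) (Real.sqrt 3 / 2) +
            pt ((m:ℝ) + n*x) ((n:ℝ)*y) =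
            pt (-(1/2) + (m + n*x)) (-(Real.sqrt 3 / 2) + n*y) := by
          rw [zero_sub, pt_neg, pt_add]
        simp only [Fin.zero_eta, Fin.mk_one, Matrix.cons_val_zero, Matrix.cons_val_one,
          Matrix.head_cons]
        rw [this]
        rw [show ‖pt (-(1/2) + ((m:ℝ) + n*x)) (-(Real.sqrt 3 / 2) + (n:ℝ)*y)‖ =
            ‖pt (1/2 + ((-m:ℤ):ℝ) + ((-n:ℤ):ℝ)*x) (Real.sqrt 3 / 2 + ((-n:ℤ):ℝ)*y)‖ by
          rw [← norm_neg, pt_neg]; push_cast; ring_nf]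
        exact one_le_norm_pt _ _ (hA (-m) (-n))
      · -- i = 1, j = 0 : p1 - p0 + l = d + l
        have : pt (1/2) (Real.sqrt 3 / 2) - (0 : EuclideanSpace ℝ (Fin 2)) +
            pt ((m:ℝ) + n*x) ((n:ℝ)*y) =
            pt (1/2 + ((m:ℝ) + n*x)) (Real.sqrt 3 / 2 + (n:ℝ)*y) := by
          rw [sub_zero, pt_add]
        simp only [Fin.zero_eta, Fin.mk_one, Matrix.cons_val_zero, Matrix.cons_val_one,
          Matrix.head_cons]
        rw [this]
        apply one_le_norm_pt
        convert hA m n using 2 <;> ring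
      · exact absurd rfl hij
  -- upper bound
  have hub : ∀ r ∈ S, r ≤ 1/2 := by
    rintro r ⟨hr0, p, hp⟩
    have hlat : pt 1 0 ∈ TLat x y := ⟨1, 0, by rw [lat_pt]; norm_num⟩
    have hne : pt 1 0 ≠ (0 : EuclideanSpace ℝ (Fin 2)) := by
      intro h
      have := norm_pt 1 0
      rw [h] at this
      simp at this
    have := hp 0 0 (pt 1 0) hlat (Or.inr hne)
    rw [sub_self, zero_add, norm_pt] at this
    have h1 : Real.sqrt ((1:ℝ)^2 + 0^2) = 1 := by norm_num
    rw [h1] at this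
    linarith
  exact le_antisymm (csSup_le ⟨1/2, hmem⟩ hub) (le_csSup ⟨1/2, hub⟩ hmem)
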